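/- arXiv:1609.04357 — 4 statements merged into one kernel-verified Lean document; each statement's English description precedes it below -/
import Mathlib

section
/- Let 0 < γ < 1 and let f : ℝ → ℝ be a Schwartz function. For every x ∈ ℝ, the integrals I_γ f(x) = ∫_ℝ (f(x) − f(y)) |x−y|^{−1−γ} dy and I_γ (f²)(x) = ∫_ℝ (f(x)² − f(y)²) |x−y|^{−1−γ} dy converge absolutely, and f(x) · I_γ f(x) ≥ (1/2) I_γ (f²)(x). -/
open MeasureTheory Set Real

/-- Integrability of `g t * |t|^(-(1+γ))` when `g` is continuous, bounded, and
vanishes linearly at `0`. -/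
lemma aux_integrable {γ : ℝ} (hγ0 : 0 < γ) (hγ1 : γ < 1) (g : ℝ → ℝ) (hg : Continuous g)
    (L M : ℝ) (hM0 : 0 ≤ M) (hL : ∀ t, |g t| ≤ L * |t|) (hM : ∀ t, |g t| ≤ M) :
    Integrable (fun t : ℝ => g t * |t| ^ (-(1 + γ))) := by
  have hw : Measurable fun t : ℝ => |t| ^ (-(1 + γ)) :=
    (measurable_id.abs).pow_const _
  have hwnn : ∀ t : ℝ, 0 ≤ |t| ^ (-(1 + γ)) := fun t => Real.rpow_nonneg (abs_nonneg t) _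
  have hmeas : ∀ h : ℝ → ℝ, Continuous h →
      AEStronglyMeasurable (fun t : ℝ => h t * |t| ^ (-(1 + γ))) volume := fun h hh =>
    (hh.measurable.mul hw).aestronglyMeasurable
  have hnorm : ∀ (h : ℝ → ℝ) (t : ℝ), ‖h t * |t| ^ (-(1 + γ))‖ = |h t| * |t| ^ (-(1 + γ)) := by
    intro h t
    rw [norm_mul, Real.norm_eq_abs, Real.norm_eq_abs, abs_of_nonneg (hwnn t)]
  -- tail integrability on `Ici 1` for any continuous `h` bounded by `M`
  have tail : ∀ h : ℝ → ℝ, Continuous h → (∀ t, |h t| ≤ M) →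
      IntegrableOn (fun t : ℝ => h t * |t| ^ (-(1 + γ))) (Ici 1) := by
    intro h hh hhM
    have base : IntegrableOn (fun t : ℝ => t ^ (-(1 + γ))) (Ioi 1) :=
      (integrableOn_Ioi_rpow_iff zero_lt_one).2 (by linarith)
    have base' : IntegrableOn (fun t : ℝ => M * t ^ (-(1 + γ))) (Ici 1) := by
      rw [integrableOn_Ici_iff_integrableOn_Ioi]
      exact base.const_mul M
    refine Integrable.mono' base' ((hmeas h hh).restrict) ?_
    refine (ae_restrict_iff' measurableSet_Ici).2 (ae_of_all _ fun t ht => ?_)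
    have ht0 : (0:ℝ) < t := lt_of_lt_of_le one_pos ht
    rw [hnorm h t, abs_of_pos ht0]
    exact mul_le_mul_of_nonneg_right (hhM t) (Real.rpow_nonneg ht0.le _)
  have hL0 : 0 ≤ L := by
    have h1 := hL 1
    have h2 := abs_nonneg (g 1)
    simp only [abs_one, mul_one] at h1
    linarith
  rw [← integrableOn_univ, ← Set.union_compl_self (Ioc (-1 : ℝ) 1), integrableOn_union]
  constructor
  · -- middle part: majorize by `L * |t| ^ (-γ)`
    have h01 : IntegrableOn (fun t : ℝ => |t| ^ (-γ)) (Ioc 0 1) := by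
      have base : IntervalIntegrable (fun t : ℝ => t ^ (-γ)) volume 0 1 :=
        intervalIntegral.intervalIntegrable_rpow' (by linarith)
      rw [intervalIntegrable_iff, uIoc_of_le (by norm_num : (0:ℝ) ≤ 1)] at base
      exact base.congr_fun (fun t ht => by rw [abs_of_pos ht.1]) measurableSet_Ioc
    have h01' : IntervalIntegrable (fun t : ℝ => |t| ^ (-γ)) volume 0 1 := by
      rw [intervalIntegrable_iff, uIoc_of_le (by norm_num : (0:ℝ) ≤ 1)]
      exact h01
    have hneg : IntervalIntegrable (fun t : ℝ => |t| ^ (-γ)) volume (-1) 0 := by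
      have := (IntervalIntegrable.iff_comp_neg (by simp)).mp h01'
      simp only [abs_neg, neg_zero] at this
      exact this.symm
    have h11 : IntegrableOn (fun t : ℝ => |t| ^ (-γ)) (Ioc (-1) 1) := by
      have := hneg.trans h01'
      rwa [intervalIntegrable_iff, uIoc_of_le (by norm_num : (-1:ℝ) ≤ 1)] at this
    refine Integrable.mono' (h11.const_mul L) ((hmeas g hg).restrict) ?_
    refine (ae_restrict_iff' measurableSet_Ioc).2 (ae_of_all _ fun t _ => ?_)
    rw [hnorm g t]
    rcases eq_or_ne t 0 with rfl | ht0
    · have hg0 : g 0 = 0 := abs_eq_zero.mp (le_antisymm (by simpa using hL 0) (abs_nonneg _))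
      rw [hg0, abs_zero, zero_mul]
      exact mul_nonneg hL0 (Real.rpow_nonneg le_rfl _)
    · have habs : (0:ℝ) < |t| := abs_pos.2 ht0
      calc |g t| * |t| ^ (-(1 + γ)) ≤ (L * |t|) * |t| ^ (-(1 + γ)) :=
            mul_le_mul_of_nonneg_right (hL t) (hwnn t)
        _ = L * (|t| ^ (1:ℝ) * |t| ^ (-(1 + γ))) := by rw [Real.rpow_one]; ring
        _ = L * |t| ^ (-γ) := by
            rw [← Real.rpow_add habs]
            congr 1
            ring
  · -- tails
    have hcompl : (Ioc (-1:ℝ) 1)ᶜ = Iic (-1) ∪ Ioi 1 := by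
      ext t
      simp only [mem_compl_iff, mem_Ioc, not_and, not_le, mem_union, mem_Iic, mem_Ioi]
      constructor
      · intro hcond
        by_cases h : -1 < t
        · exact Or.inr (hcond h)
        · exact Or.inl (by linarith [not_lt.mp h])
      · rintro (h | h) h2 <;> linarith
    rw [hcompl, integrableOn_union]
    constructor
    · -- `Iic (-1)`: reflect to `Ici 1`
      have hset : Iic (-1:ℝ) = (fun t : ℝ => -t) ⁻¹' (Ici 1) := by
        ext t
        simp only [mem_Iic, mem_preimage, mem_Ici, le_neg]
      rw [hset]
      have key := (Measure.measurePreserving_neg (volume : Measure ℝ)).integrableOn_comp_preimage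
        (Homeomorph.neg ℝ).measurableEmbedding
        (f := fun s : ℝ => g (-s) * |s| ^ (-(1 + γ))) (s := Ici 1)
      have htail := tail (fun s => g (-s)) (hg.comp continuous_neg) (fun s => hM (-s))
      have := key.2 htail
      have heq : (fun s : ℝ => g (-s) * |s| ^ (-(1 + γ))) ∘ (Neg.neg : ℝ → ℝ) =
          fun t : ℝ => g t * |t| ^ (-(1 + γ)) := by
        ext t
        simp [Function.comp, abs_neg]
      rwa [heq] at this
    · exact (tail g hg hM).mono_set Ioi_subset_Ici_self

/-- Pointwise inequality `f Λ^γ f ≥ (1/2) Λ^γ (f²)` for `0 < γ < 1` and `f` Schwartz,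
where `I_γ g(x) = ∫ (g(x) − g(y)) |x−y|^{−1−γ} dy` is the (un-normalized) fractional
Laplacian, the integrals converging absolutely. -/
theorem pointwise_fractional_square (γ : ℝ) (hγ0 : 0 < γ) (hγ1 : γ < 1)
    (f : SchwartzMap ℝ ℝ) (x : ℝ) :
    Integrable (fun y : ℝ => (f x - f y) * |x - y| ^ (-(1 + γ))) ∧
    Integrable (fun y : ℝ => (f x ^ 2 - f y ^ 2) * |x - y| ^ (-(1 + γ))) ∧
    (1 / 2) * (∫ y : ℝ, (f x ^ 2 - f y ^ 2) * |x - y| ^ (-(1 + γ))) ≤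
      f x * ∫ y : ℝ, (f x - f y) * |x - y| ^ (-(1 + γ)) := by
  -- bound on `f`
  obtain ⟨M, hMpos, hM⟩ := f.decay 0 0
  simp only [pow_zero, one_mul, norm_iteratedFDeriv_zero] at hM
  -- Lipschitz bound on `f`
  obtain ⟨C, hCpos, hC⟩ := (SchwartzMap.derivCLM ℝ ℝ f).decay 0 0
  simp only [pow_zero, one_mul, norm_iteratedFDeriv_zero] at hC
  have hC' : ∀ t : ℝ, ‖deriv f t‖ ≤ C := by
    intro t
    have := hC t
    rwa [SchwartzMap.derivCLM_apply] at this
  have lipf : LipschitzWith ⟨C, hCpos.le⟩ f :=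
    lipschitzWith_of_nnnorm_deriv_le f.differentiable fun t => by
      apply NNReal.coe_le_coe.mp
      exact hC' t
  have lip : ∀ a b : ℝ, |f a - f b| ≤ C * |a - b| := by
    intro a b
    have := lipf.dist_le_mul a b
    rwa [Real.dist_eq, Real.dist_eq] at this
  have hMabs : ∀ y : ℝ, |f y| ≤ M := fun y => by
    have := hM y; rwa [Real.norm_eq_abs] at this
  -- first integrability
  have i1 : Integrable (fun y : ℝ => (f x - f y) * |x - y| ^ (-(1 + γ))) := by
    have haux := aux_integrable hγ0 hγ1 (fun t => f x - f (x - t))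
      (continuous_const.sub (f.continuous.comp (continuous_const.sub continuous_id)))
      C (2 * M) (by linarith)
      (fun t => by simpa [sub_sub_cancel] using lip x (x - t))
      (fun t => by
        have h1 := hMabs x
        have h2 := hMabs (x - t)
        have h3 : |f x - f (x - t)| ≤ |f x| + |f (x - t)| := by
          simpa [Real.norm_eq_abs] using norm_sub_le (f x) (f (x - t))
        linarith)
    have := (integrable_comp_sub_left
      (fun t : ℝ => (f x - f (x - t)) * |t| ^ (-(1 + γ))) x).2 haux
    simpa [sub_sub_cancel] using this
  -- second integrability
  have i2 : Integrable (fun y : ℝ => (f x ^ 2 - f y ^ 2) * |x - y| ^ (-(1 + γ))) := by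
    have haux := aux_integrable hγ0 hγ1 (fun t => f x ^ 2 - f (x - t) ^ 2)
      (continuous_const.sub ((f.continuous.comp (continuous_const.sub continuous_id)).pow 2))
      (2 * M * C) (2 * M ^ 2) (by positivity)
      (fun t => by
        have h1 : |f x + f (x - t)| ≤ 2 * M := by
          have := hMabs x
          have := hMabs (x - t)
          have h3 : |f x + f (x - t)| ≤ |f x| + |f (x - t)| := abs_add_le _ _
          linarith
        have h2 : |f x - f (x - t)| ≤ C * |t| := by
          simpa [sub_sub_cancel] using lip x (x - t)
        calc |f x ^ 2 - f (x - t) ^ 2|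
            = |f x + f (x - t)| * |f x - f (x - t)| := by
              rw [← abs_mul]; ring_nf
          _ ≤ (2 * M) * (C * |t|) := by
              apply mul_le_mul h1 h2 (abs_nonneg _) (by linarith)
          _ = (2 * M * C) * |t| := by ring)
      (fun t => by
        have h1 := hMabs x
        have h2 := hMabs (x - t)
        have h3 : |f x ^ 2 - f (x - t) ^ 2| ≤ |f x ^ 2| + |f (x - t) ^ 2| := by
          calc |f x ^ 2 - f (x - t) ^ 2| = |f x ^ 2 + -(f (x - t) ^ 2)| := by
                rw [sub_eq_add_neg]
            _ ≤ |f x ^ 2| + |-(f (x - t) ^ 2)| := abs_add_le _ _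
            _ = |f x ^ 2| + |f (x - t) ^ 2| := by rw [abs_neg]
        rw [abs_of_nonneg (sq_nonneg (f x)), abs_of_nonneg (sq_nonneg (f (x - t)))] at h3
        nlinarith [abs_nonneg (f x), abs_nonneg (f (x - t)), sq_abs (f x), sq_abs (f (x - t))])
    have := (integrable_comp_sub_left
      (fun t : ℝ => (f x ^ 2 - f (x - t) ^ 2) * |t| ^ (-(1 + γ))) x).2 haux
    simpa [sub_sub_cancel] using this
  refine ⟨i1, i2, ?_⟩
  -- the pointwise inequality, integrated
  have hdiff : Integrable (fun y : ℝ =>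
      f x * ((f x - f y) * |x - y| ^ (-(1 + γ))) -
      (1 / 2) * ((f x ^ 2 - f y ^ 2) * |x - y| ^ (-(1 + γ)))) :=
    (i1.const_mul (f x)).sub (i2.const_mul (1 / 2))
  have hnn : 0 ≤ ∫ y : ℝ,
      (f x * ((f x - f y) * |x - y| ^ (-(1 + γ))) -
       (1 / 2) * ((f x ^ 2 - f y ^ 2) * |x - y| ^ (-(1 + γ)))) := by
    refine integral_nonneg fun y => ?_
    have hw : (0:ℝ) ≤ |x - y| ^ (-(1 + γ)) := Real.rpow_nonneg (abs_nonneg _) _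
    have key : f x * ((f x - f y) * |x - y| ^ (-(1 + γ))) -
        (1 / 2) * ((f x ^ 2 - f y ^ 2) * |x - y| ^ (-(1 + γ))) =
        (1 / 2) * (f x - f y) ^ 2 * |x - y| ^ (-(1 + γ)) := by ring
    rw [key]
    exact mul_nonneg (mul_nonneg (by norm_num) (sq_nonneg _)) hw
  have hsplit : (∫ y : ℝ,
      (f x * ((f x - f y) * |x - y| ^ (-(1 + γ))) -
       (1 / 2) * ((f x ^ 2 - f y ^ 2) * |x - y| ^ (-(1 + γ))))) =
      f x * (∫ y : ℝ, (f x - f y) * |x - y| ^ (-(1 + γ))) -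
      (1 / 2) * (∫ y : ℝ, (f x ^ 2 - f y ^ 2) * |x - y| ^ (-(1 + γ))) := by
    rw [integral_sub (i1.const_mul (f x)) (i2.const_mul (1 / 2)),
      integral_const_mul, integral_const_mul]
  rw [hsplit] at hnn
  linarith
end

section
/- Let 0 < γ < 1 and let f : ℝ → ℝ be a Schwartz function with f(x) ≥ 0 for all x ∈ ℝ. Then for every x ∈ ℝ, f(x)² · I_γ f(x) ≥ (1/3) I_γ (f³)(x), where I_γ g(x) = ∫_ℝ (g(x) − g(y)) |x−y|^{−1−γ} dy (both integrals converging absolutely). -/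
open MeasureTheory Set

lemma integrableOn_min_Ioi {γ : ℝ} (hγ0 : 0 < γ) (hγ1 : γ < 1) :
    IntegrableOn (fun t : ℝ => min 1 |t| * |t| ^ (-(1 + γ))) (Ioi 0) := by
  have h1 : IntegrableOn (fun t : ℝ => min 1 |t| * |t| ^ (-(1 + γ))) (Ioo 0 1) := by
    have : IntegrableOn (fun t : ℝ => t ^ (-γ)) (Ioo (0:ℝ) 1) :=
      (intervalIntegral.integrableOn_Ioo_rpow_iff one_pos).2 (by linarith)
    refine this.congr_fun (fun t ht => ?_) measurableSet_Ioo
    obtain ⟨ht0, ht1⟩ := ht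
    rw [abs_of_pos ht0, min_eq_right ht1.le]
    rw [show -γ = 1 + (-(1+γ)) by ring]
    beta_reduce
    rw [Real.rpow_add ht0, Real.rpow_one]
  have h2 : IntegrableOn (fun t : ℝ => min 1 |t| * |t| ^ (-(1 + γ))) (Ici 1) := by
    have hint : IntegrableOn (fun t : ℝ => t ^ (-(1+γ))) (Ioi (1/2 : ℝ)) :=
      integrableOn_Ioi_rpow_of_lt (by linarith) (by norm_num)
    refine (hint.mono (fun t ht => by simp at ht ⊢; linarith) le_rfl).congr_fun
      (fun t ht => ?_) measurableSet_Ici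
    have ht1 : (1:ℝ) ≤ t := ht
    rw [abs_of_pos (by linarith), min_eq_left ht1, one_mul]
  have hsub : Ioi (0:ℝ) ⊆ Ioo 0 1 ∪ Ici 1 := by
    intro t ht; rcases lt_or_ge t 1 with h | h
    · exact Or.inl ⟨ht, h⟩
    · exact Or.inr h
  exact (h1.union h2).mono hsub le_rfl

lemma integrable_min_abs_rpow {γ : ℝ} (hγ0 : 0 < γ) (hγ1 : γ < 1) :
    Integrable (fun t : ℝ => min 1 |t| * |t| ^ (-(1 + γ))) := by
  let F : ℝ → ℝ := fun t => min 1 |t| * |t| ^ (-(1 + γ))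
  have hsymm : ∀ t, F (-t) = F t := by
    intro t
    show min 1 |(-t)| * |(-t)| ^ (-(1 + γ)) = min 1 |t| * |t| ^ (-(1 + γ))
    rw [abs_neg]
  show Integrable F
  have hpos : IntegrableOn F (Ioi 0) := integrableOn_min_Ioi hγ0 hγ1
  have hzero : IntegrableOn F (Ici 0) := by
    have hsing : IntegrableOn F ({0} : Set ℝ) :=
      (integrableOn_singleton_iff (by simp)).2 (Or.inr (by simp))
    have hU : Ici (0:ℝ) = {0} ∪ Ioi 0 := by
      ext t; simp [le_iff_lt_or_eq, eq_comm, or_comm]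
    rw [hU]; exact hsing.union hpos
  have hind : Integrable (indicator (Ici 0) F) :=
    (integrable_indicator_iff measurableSet_Ici).2 hzero
  have hneg : IntegrableOn F (Iic 0) := by
    have h3 : Integrable (fun t => indicator (Ici 0) F (-t)) := hind.comp_neg
    have heq : (fun t => indicator (Ici 0) F (-t)) = indicator (Iic 0) F := by
      funext t
      by_cases h : t ≤ 0
      · simp [Set.indicator_apply, mem_Ici, mem_Iic, h, neg_nonneg, hsymm t]
      · simp [Set.indicator_apply, mem_Ici, mem_Iic, h, neg_nonneg, not_le.1 h,
          not_le.1 h |>.not_ge]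
    rw [heq] at h3
    exact (integrable_indicator_iff measurableSet_Iic).1 h3
  have hcover : (univ : Set ℝ) ⊆ Iic 0 ∪ Ioi 0 := by
    intro t _; exact le_or_gt t 0
  rw [← integrableOn_univ]
  exact (hneg.union hpos).mono hcover le_rfl

lemma integrable_kernel {γ : ℝ} (hγ0 : 0 < γ) (hγ1 : γ < 1) {g : ℝ → ℝ}
    (hg : Measurable g) (x : ℝ) {C : ℝ}
    (hC : ∀ y, |g x - g y| ≤ C * min 1 |x - y|) :
    Integrable (fun y : ℝ => (g x - g y) * |x - y| ^ (-(1 + γ))) := by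
  have hmeas : AEStronglyMeasurable (fun y : ℝ => (g x - g y) * |x - y| ^ (-(1 + γ))) volume := by
    apply Measurable.aestronglyMeasurable
    fun_prop
  have hmaj : Integrable (fun y : ℝ => C * (min 1 |x - y| * |x - y| ^ (-(1 + γ)))) :=
    ((integrable_min_abs_rpow hγ0 hγ1).comp_sub_left x).const_mul C
  refine hmaj.mono' hmeas (Filter.Eventually.of_forall fun y => ?_)
  have hw : (0:ℝ) ≤ |x - y| ^ (-(1 + γ)) := Real.rpow_nonneg (abs_nonneg _) _
  calc ‖(g x - g y) * |x - y| ^ (-(1 + γ))‖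
      = |g x - g y| * |x - y| ^ (-(1 + γ)) := by
        rw [Real.norm_eq_abs, abs_mul, abs_of_nonneg hw]
    _ ≤ (C * min 1 |x - y|) * |x - y| ^ (-(1 + γ)) :=
        mul_le_mul_of_nonneg_right (hC y) hw
    _ = C * (min 1 |x - y| * |x - y| ^ (-(1 + γ))) := by ring

/-- Pointwise inequality `f² Λ^γ f ≥ (1/3) Λ^γ (f³)` for `0 < γ < 1` and nonnegative
Schwartz `f`, where `I_γ g(x) = ∫ (g(x) − g(y)) |x−y|^{−1−γ} dy` is the (un-normalized)
fractional Laplacian, the integrals converging absolutely. -/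
theorem pointwise_fractional_cube (γ : ℝ) (hγ0 : 0 < γ) (hγ1 : γ < 1)
    (f : SchwartzMap ℝ ℝ) (hf : ∀ x, 0 ≤ f x) (x : ℝ) :
    Integrable (fun y : ℝ => (f x - f y) * |x - y| ^ (-(1 + γ))) ∧
    Integrable (fun y : ℝ => (f x ^ 3 - f y ^ 3) * |x - y| ^ (-(1 + γ))) ∧
    (1 / 3) * (∫ y : ℝ, (f x ^ 3 - f y ^ 3) * |x - y| ^ (-(1 + γ))) ≤
      f x ^ 2 * ∫ y : ℝ, (f x - f y) * |x - y| ^ (-(1 + γ)) := by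
  obtain ⟨M, hMpos, hM⟩ := f.decay 0 0
  simp only [norm_iteratedFDeriv_zero, pow_zero, one_mul] at hM
  obtain ⟨L, hLpos, hL'⟩ := f.decay 0 1
  simp only [pow_zero, one_mul] at hL'
  have hfd : Differentiable ℝ f := f.differentiable
  have hLip : ∀ a b : ℝ, |f a - f b| ≤ L * |a - b| := by
    intro a b
    have := Convex.norm_image_sub_le_of_norm_fderiv_le (f := (f : ℝ → ℝ)) (C := L)
      (fun z _ => hfd z)
      (fun z _ => by
        have h1 := hL' z
        rw [← norm_iteratedFDeriv_fderiv, norm_iteratedFDeriv_zero] at h1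
        exact h1) (convex_univ) (mem_univ b) (mem_univ a)
    simpa [Real.norm_eq_abs] using this
  have hbound : ∀ y : ℝ, |f x - f y| ≤ (2*M + L) * min 1 |x - y| := by
    intro y
    rcases le_or_gt |x - y| 1 with h | h
    · rw [min_eq_right h]
      calc |f x - f y| ≤ L * |x - y| := hLip x y
        _ ≤ (2*M + L) * |x - y| := by nlinarith [abs_nonneg (x - y)]
    · rw [min_eq_left h.le]
      calc |f x - f y| ≤ |f x| + |f y| := abs_sub _ _
        _ ≤ 2*M + L := by
            have h1 := hM x; have h2 := hM y
            simp only [Real.norm_eq_abs] at h1 h2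
            linarith
        _ = (2*M + L) * 1 := by ring
  have hbound3 : ∀ y : ℝ, |f x ^ 3 - f y ^ 3| ≤ (3*M^2*(2*M + L)) * min 1 |x - y| := by
    intro y
    have h1 := hM x; have h2 := hM y
    simp only [Real.norm_eq_abs] at h1 h2
    have hfac : |f x ^ 3 - f y ^ 3| ≤ 3*M^2 * |f x - f y| := by
      have hexp : f x ^ 3 - f y ^ 3 = (f x - f y) * (f x ^ 2 + f x * f y + f y ^ 2) := by ring
      rw [hexp, abs_mul]
      have hb : |f x ^ 2 + f x * f y + f y ^ 2| ≤ 3 * M ^ 2 := by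
        have hx2 : f x ^ 2 ≤ M ^ 2 := by nlinarith [abs_le.1 h1, abs_le.1 h2]
        have hy2 : f y ^ 2 ≤ M ^ 2 := by nlinarith [abs_le.1 h1, abs_le.1 h2]
        have hxy : f x * f y ≤ M ^ 2 := by nlinarith [abs_le.1 h1, abs_le.1 h2]
        rw [abs_of_nonneg (by nlinarith [hf x, hf y])]
        linarith
      calc |f x - f y| * |f x ^ 2 + f x * f y + f y ^ 2|
          ≤ |f x - f y| * (3 * M ^ 2) := mul_le_mul_of_nonneg_left hb (abs_nonneg _)
        _ = 3*M^2 * |f x - f y| := by ring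
    calc |f x ^ 3 - f y ^ 3| ≤ 3*M^2 * |f x - f y| := hfac
      _ ≤ 3*M^2 * ((2*M + L) * min 1 |x - y|) :=
          mul_le_mul_of_nonneg_left (hbound y) (by positivity)
      _ = (3*M^2*(2*M + L)) * min 1 |x - y| := by ring
  have hmeasf : Measurable (f : ℝ → ℝ) := f.continuous.measurable
  have int1 : Integrable (fun y : ℝ => (f x - f y) * |x - y| ^ (-(1 + γ))) :=
    integrable_kernel hγ0 hγ1 hmeasf x hbound
  have int2 : Integrable (fun y : ℝ => (f x ^ 3 - f y ^ 3) * |x - y| ^ (-(1 + γ))) :=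
    integrable_kernel hγ0 hγ1 (g := fun z => f z ^ 3) (hmeasf.pow_const 3) x hbound3
  refine ⟨int1, int2, ?_⟩
  rw [← sub_nonneg]
  have hrw : f x ^ 2 * (∫ y : ℝ, (f x - f y) * |x - y| ^ (-(1 + γ)))
      - (1 / 3) * (∫ y : ℝ, (f x ^ 3 - f y ^ 3) * |x - y| ^ (-(1 + γ)))
      = ∫ y : ℝ, (f x ^ 2 * ((f x - f y) * |x - y| ^ (-(1 + γ)))
          - (1 / 3) * ((f x ^ 3 - f y ^ 3) * |x - y| ^ (-(1 + γ)))) := by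
    rw [integral_sub (int1.const_mul _) (int2.const_mul _),
      integral_const_mul, integral_const_mul]
  rw [hrw]
  refine integral_nonneg fun y => ?_
  have hw : (0:ℝ) ≤ |x - y| ^ (-(1 + γ)) := Real.rpow_nonneg (abs_nonneg _) _
  have ha := hf x; have hb := hf y
  have hpt : 0 ≤ f x ^ 2 * (f x - f y) - (1/3) * (f x ^ 3 - f y ^ 3) := by
    nlinarith [sq_nonneg (f x - f y), sq_nonneg (f x + f y)]
  calc (0:ℝ) ≤ (f x ^ 2 * (f x - f y) - (1/3) * (f x ^ 3 - f y ^ 3)) * |x - y| ^ (-(1 + γ)) :=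
        mul_nonneg hpt hw
    _ = f x ^ 2 * ((f x - f y) * |x - y| ^ (-(1 + γ)))
        - (1 / 3) * ((f x ^ 3 - f y ^ 3) * |x - y| ^ (-(1 + γ))) := by ring
end

section
/- Let 0 < γ < 1 and let θ : ℝ → ℝ be a Schwartz function with θ(x) ≥ 0 for all x. Then ∫_ℝ θ(x)² I_γ θ(x) dx = (1/2) ∫_ℝ ∫_ℝ (θ(x) − θ(y))² (θ(x) + θ(y)) |x−y|^{−1−γ} dy dx, and in particular ∫_ℝ θ(x)² I_γ θ(x) dx ≥ 0, where I_γ θ(x) = ∫_ℝ (θ(x) − θ(y)) |x−y|^{−1−γ} dy. -/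
open MeasureTheory Set

private lemma kernelIntegrable' {γ L M : ℝ} (hγ0 : 0 < γ) (hγ1 : γ < 1) (hL0 : 0 ≤ L)
    (hM0 : 0 ≤ M) :
    Integrable (fun u : ℝ => min (L * |u|) (2 * M) * |u| ^ (-(1 + γ))) := by
  set H : ℝ → ℝ := fun u => min (L * |u|) (2 * M) * |u| ^ (-(1 + γ)) with hHdef
  have hHm : Measurable H :=
    ((measurable_abs.const_mul L).min measurable_const).mul (measurable_abs.pow_const _)
  have hH0 : ∀ u, 0 ≤ H u := fun u =>
    mul_nonneg (le_min (mul_nonneg hL0 (abs_nonneg _)) (by positivity))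
      (Real.rpow_nonneg (abs_nonneg _) _)
  have hHe : ∀ u : ℝ, H (-u) = H u := by intro u; simp [hHdef, abs_neg]
  have hHzero : H 0 = 0 := by
    simp [hHdef, Real.zero_rpow (show -(1 + γ) ≠ 0 by nlinarith)]
    exact Or.inl hM0
  have hInt1 : IntegrableOn H (Ioc (0:ℝ) 1) := by
    have base : IntegrableOn (fun u : ℝ => u ^ (-γ)) (Ioc (0:ℝ) 1) := by
      rw [integrableOn_Ioc_iff_integrableOn_Ioo]
      exact (intervalIntegral.integrableOn_Ioo_rpow_iff zero_lt_one).2 (by linarith)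
    refine Integrable.mono' (base.const_mul L) hHm.aestronglyMeasurable.restrict ?_
    filter_upwards [ae_restrict_mem measurableSet_Ioc] with u hu
    have hu0 : 0 < u := hu.1
    rw [Real.norm_eq_abs, abs_of_nonneg (hH0 u)]
    have h1 : u ^ (-γ) = u * u ^ (-(1 + γ)) := by
      rw [show -γ = 1 + -(1 + γ) by ring, Real.rpow_add hu0, Real.rpow_one]
    calc H u ≤ (L * u) * u ^ (-(1 + γ)) := by
          rw [hHdef]; dsimp only; rw [abs_of_pos hu0]
          exact mul_le_mul_of_nonneg_right (min_le_left _ _) (Real.rpow_nonneg hu0.le _)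
      _ = L * u ^ (-γ) := by rw [mul_assoc, ← h1]
  have hInt2 : IntegrableOn H (Ioi (1:ℝ)) := by
    have base : IntegrableOn (fun u : ℝ => u ^ (-(1 + γ))) (Ioi (1:ℝ)) :=
      integrableOn_Ioi_rpow_of_lt (by linarith) zero_lt_one
    refine Integrable.mono' (base.const_mul (2 * M)) hHm.aestronglyMeasurable.restrict ?_
    filter_upwards [ae_restrict_mem measurableSet_Ioi] with u hu
    have hu0 : (0:ℝ) < u := lt_trans zero_lt_one hu
    rw [Real.norm_eq_abs, abs_of_nonneg (hH0 u)]
    calc H u ≤ (2 * M) * |u| ^ (-(1 + γ)) := by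
          rw [hHdef]; dsimp only
          exact mul_le_mul_of_nonneg_right (min_le_right _ _) (Real.rpow_nonneg (abs_nonneg _) _)
      _ = 2 * M * u ^ (-(1 + γ)) := by rw [abs_of_pos hu0]
  have hIoi : IntegrableOn H (Ioi (0:ℝ)) := by
    rw [← Ioc_union_Ioi_eq_Ioi (zero_le_one' ℝ)]
    exact hInt1.union hInt2
  have hInd : Integrable ((Ioi (0:ℝ)).indicator H) := hIoi.integrable_indicator measurableSet_Ioi
  have hIndNeg : Integrable (fun u : ℝ => (Ioi (0:ℝ)).indicator H (-u)) := hInd.comp_neg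
  refine (hInd.add hIndNeg).congr (Filter.Eventually.of_forall fun u => ?_)
  show (Ioi (0:ℝ)).indicator H u + (Ioi (0:ℝ)).indicator H (-u) = H u
  rcases lt_trichotomy u 0 with h | h | h
  · rw [indicator_of_notMem (by simpa using h.le), indicator_of_mem (by simpa using h), hHe,
      zero_add]
  · subst h; simp [hHzero]
  · rw [indicator_of_mem (by simpa using h), indicator_of_notMem (by simpa using h.le), add_zero]

/-- For `0 < γ < 1` and a nonnegative Schwartz function `θ`,
`∫ θ² I_γ θ dx = (1/2) ∫∫ (θ(x) − θ(y))² (θ(x) + θ(y)) |x−y|^{−1−γ} dy dx ≥ 0`,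
where `I_γ θ(x) = ∫ (θ(x) − θ(y)) |x−y|^{−1−γ} dy`. -/
theorem integral_sq_fractional_nonneg (γ : ℝ) (hγ0 : 0 < γ) (hγ1 : γ < 1)
    (θ : SchwartzMap ℝ ℝ) (hθ : ∀ x, 0 ≤ θ x) :
    (∫ x : ℝ, θ x ^ 2 * ∫ y : ℝ, (θ x - θ y) * |x - y| ^ (-(1 + γ))) =
      (1 / 2) * ∫ x : ℝ, ∫ y : ℝ,
        (θ x - θ y) ^ 2 * (θ x + θ y) * |x - y| ^ (-(1 + γ)) ∧
    0 ≤ ∫ x : ℝ, θ x ^ 2 * ∫ y : ℝ, (θ x - θ y) * |x - y| ^ (-(1 + γ)) := by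
  -- bound and Lipschitz constants
  obtain ⟨M, hM0, hMb⟩ : ∃ M : ℝ, 0 ≤ M ∧ ∀ x, |θ x| ≤ M := by
    obtain ⟨M, hM0, hM⟩ := θ.decay 0 0
    exact ⟨M, hM0.le, fun x => by
      simpa [norm_iteratedFDeriv_zero, Real.norm_eq_abs] using hM x⟩
  obtain ⟨L, hL0, hlip⟩ : ∃ L : ℝ, 0 ≤ L ∧ ∀ x y, |θ x - θ y| ≤ L * |x - y| := by
    obtain ⟨C, hC0, hC⟩ := (SchwartzMap.derivCLM ℝ ℝ θ).decay 0 0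
    have hd : ∀ x : ℝ, ‖deriv (⇑θ) x‖₊ ≤ C.toNNReal := by
      intro x
      have := hC x
      simp only [pow_zero, one_mul, norm_iteratedFDeriv_zero] at this
      rw [← NNReal.coe_le_coe]
      simp only [coe_nnnorm]
      rw [Real.coe_toNNReal']
      refine le_max_of_le_left ?_
      rw [← SchwartzMap.derivCLM_apply ℝ θ x]
      exact this
    have hlip := lipschitzWith_of_nnnorm_deriv_le (θ.differentiable) hd
    refine ⟨C.toNNReal, C.toNNReal.coe_nonneg, fun x y => ?_⟩
    have := hlip.dist_le_mul x y
    rwa [Real.dist_eq, Real.dist_eq] at this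
  set H : ℝ → ℝ := fun u => min (L * |u|) (2 * M) * |u| ^ (-(1 + γ)) with hHdef
  have hHint : Integrable H := kernelIntegrable' hγ0 hγ1 hL0 hM0
  have hHe : ∀ u : ℝ, H (-u) = H u := by intro u; simp [hHdef, abs_neg]
  have hHzero : H 0 = 0 := by
    simp [hHdef, Real.zero_rpow (show -(1 + γ) ≠ 0 by nlinarith)]
    exact Or.inl hM0
  have hH0 : ∀ u, 0 ≤ H u := fun u =>
    mul_nonneg (le_min (mul_nonneg hL0 (abs_nonneg _)) (by positivity))
      (Real.rpow_nonneg (abs_nonneg _) _)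
  -- pointwise bound for the difference kernel
  have hKb : ∀ x y : ℝ, |(θ x - θ y) * |x - y| ^ (-(1 + γ))| ≤ H (x - y) := by
    intro x y
    rcases eq_or_ne x y with rfl | hne
    · simp [hHzero, Real.zero_rpow (show -(1 + γ) ≠ 0 by nlinarith)]
    · rw [abs_mul, abs_of_nonneg (Real.rpow_nonneg (abs_nonneg _) _), hHdef]
      refine mul_le_mul_of_nonneg_right ?_ (Real.rpow_nonneg (abs_nonneg _) _)
      refine le_min (hlip x y) ?_
      have htri : |θ x - θ y| ≤ |θ x| + |θ y| := by
        rw [sub_eq_add_neg]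
        exact (abs_add_le _ _).trans_eq (by rw [abs_neg])
      calc |θ x - θ y| ≤ |θ x| + |θ y| := htri
        _ ≤ M + M := add_le_add (hMb x) (hMb y)
        _ = 2 * M := by ring
  -- the main integrand on the product space
  set F : ℝ → ℝ → ℝ := fun x y => θ x ^ 2 * ((θ x - θ y) * |x - y| ^ (-(1 + γ))) with hFdef
  have hFm : AEStronglyMeasurable (Function.uncurry F) (volume.prod volume) := by
    have m1 : Measurable fun p : ℝ × ℝ => θ p.1 := θ.continuous.measurable.comp measurable_fst
    have m2 : Measurable fun p : ℝ × ℝ => θ p.2 := θ.continuous.measurable.comp measurable_snd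
    exact ((m1.pow_const 2).mul
      ((m1.sub m2).mul ((measurable_fst.sub measurable_snd).abs.pow_const _))).aestronglyMeasurable
  have hFb : ∀ p : ℝ × ℝ, ‖Function.uncurry F p‖ ≤ M * θ p.1 * H (p.1 - p.2) := by
    intro p
    rw [Real.norm_eq_abs]
    show |θ p.1 ^ 2 * ((θ p.1 - θ p.2) * |p.1 - p.2| ^ (-(1 + γ)))| ≤ _
    rw [abs_mul]
    refine mul_le_mul ?_ (hKb p.1 p.2) (abs_nonneg _) (mul_nonneg hM0 (hθ p.1))
    rw [abs_of_nonneg (by positivity), sq]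
    exact mul_le_mul_of_nonneg_right ((le_abs_self _).trans (hMb p.1)) (hθ p.1)
  have hBint : Integrable (fun p : ℝ × ℝ => M * θ p.1 * H (p.1 - p.2)) (volume.prod volume) := by
    have hf : Integrable (fun t : ℝ => M * θ t) := θ.integrable.const_mul M
    have h1 := hf.convolution_integrand (ContinuousLinearMap.mul ℝ ℝ) hHint
    have h2 : Integrable (fun p : ℝ × ℝ => M * θ p.2 * H (p.1 - p.2)) (volume.prod volume) := by
      simpa using h1
    refine h2.swap.congr (Filter.Eventually.of_forall fun p => ?_)
    show M * θ p.1 * H (p.2 - p.1) = M * θ p.1 * H (p.1 - p.2)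
    rw [show p.2 - p.1 = -(p.1 - p.2) by ring, hHe]
  have hFint : Integrable (Function.uncurry F) (volume.prod volume) :=
    hBint.mono' hFm (Filter.Eventually.of_forall hFb)
  have hFswap : Integrable (Function.uncurry F ∘ Prod.swap) (volume.prod volume) := hFint.swap
  -- the symmetrized integrand
  set G : ℝ → ℝ → ℝ := fun x y => (θ x - θ y) ^ 2 * (θ x + θ y) * |x - y| ^ (-(1 + γ)) with hGdef
  have hsum : ∀ p : ℝ × ℝ,
      Function.uncurry F p + (Function.uncurry F ∘ Prod.swap) p = Function.uncurry G p := by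
    intro p
    show F p.1 p.2 + F p.2 p.1 = G p.1 p.2
    rw [hFdef, hGdef]
    dsimp only
    rw [show |p.2 - p.1| = |p.1 - p.2| from abs_sub_comm _ _]
    ring
  have hGint : Integrable (Function.uncurry G) (volume.prod volume) :=
    (hFint.add hFswap).congr (Filter.Eventually.of_forall hsum)
  -- the two main computations
  have hsum' : ∀ p : ℝ × ℝ, F p.1 p.2 + F p.2 p.1 = G p.1 p.2 := fun p => hsum p
  have hFswap' : Integrable (fun z : ℝ × ℝ => F z.2 z.1) (volume.prod volume) := hFint.swap
  have hFint' : Integrable (fun z : ℝ × ℝ => F z.1 z.2) (volume.prod volume) := hFint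
  have key : (∫ x : ℝ, ∫ y : ℝ, F x y) = ∫ z : ℝ × ℝ, F z.1 z.2 ∂(volume.prod volume) :=
    integral_integral hFint
  have keyG : (∫ x : ℝ, ∫ y : ℝ, G x y) = ∫ z : ℝ × ℝ, G z.1 z.2 ∂(volume.prod volume) :=
    integral_integral hGint
  have hswapInt : (∫ z : ℝ × ℝ, F z.2 z.1 ∂(volume.prod volume))
      = ∫ z : ℝ × ℝ, F z.1 z.2 ∂(volume.prod volume) := by
    have := integral_prod_swap (μ := (volume : Measure ℝ)) (ν := (volume : Measure ℝ))
      (fun z : ℝ × ℝ => F z.1 z.2)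
    simpa using this
  have hGsum : (∫ z : ℝ × ℝ, G z.1 z.2 ∂(volume.prod volume))
      = 2 * ∫ z : ℝ × ℝ, F z.1 z.2 ∂(volume.prod volume) := by
    have h1 : (∫ z : ℝ × ℝ, G z.1 z.2 ∂(volume.prod volume))
        = ∫ z : ℝ × ℝ, (F z.1 z.2 + F z.2 z.1) ∂(volume.prod volume) :=
      integral_congr_ae (Filter.Eventually.of_forall fun p => (hsum' p).symm)
    rw [h1, integral_add hFint' hFswap', hswapInt]; ring
  have hA : (∫ x : ℝ, θ x ^ 2 * ∫ y : ℝ, (θ x - θ y) * |x - y| ^ (-(1 + γ)))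
      = ∫ x : ℝ, ∫ y : ℝ, F x y := by
    refine integral_congr_ae (Filter.Eventually.of_forall fun x => ?_)
    dsimp only
    rw [← integral_const_mul]
  have hGS : (∫ x : ℝ, ∫ y : ℝ, G x y)
      = 2 * ∫ z : ℝ × ℝ, F z.1 z.2 ∂(volume.prod volume) := keyG.trans hGsum
  have hGnn : 0 ≤ ∫ x : ℝ, ∫ y : ℝ, G x y := by
    refine integral_nonneg fun x => integral_nonneg fun y => ?_
    exact mul_nonneg (mul_nonneg (sq_nonneg _) (add_nonneg (hθ x) (hθ y)))
      (Real.rpow_nonneg (abs_nonneg _) _)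
  constructor
  · show _ = (1 / 2) * ∫ x : ℝ, ∫ y : ℝ, G x y
    rw [hA, key, hGS]; ring
  · rw [hA, key]
    linarith [hGnn, hGS]
end

section
/- Let 0 < β < 1, 0 < s < 1, and w_β(x) = (1 + |x|²)^{−β/2}. Then for every x ∈ ℝ the integral ∫_ℝ (w_β(x) − w_β(y)) |x−y|^{−1−s} dy converges absolutely, and there exists a constant C = C(s, β) > 0 such that for all x ∈ ℝ, | ∫_ℝ (w_β(x) − w_β(y)) |x−y|^{−1−s} dy | ≤ C · w_β(x). -/
open MeasureTheory Set

set_option maxHeartbeats 1000000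

/-- The weight `w_β(x) = (1 + |x|²)^{−β/2}`. -/
noncomputable def wbeta (β x : ℝ) : ℝ := (1 + x ^ 2) ^ (-(β / 2))

namespace WbetaAux

lemma wbeta_sqrt (β x : ℝ) : wbeta β x = (Real.sqrt (1 + x ^ 2)) ^ (-β) := by
  unfold wbeta
  rw [Real.sqrt_eq_rpow, ← Real.rpow_mul (by positivity)]
  ring_nf

lemma one_le_sqrt' (x : ℝ) : (1:ℝ) ≤ Real.sqrt (1 + x ^ 2) :=
  Real.one_le_sqrt.mpr (by nlinarith)

lemma abs_le_sqrt' (x : ℝ) : |x| ≤ Real.sqrt (1 + x ^ 2) := by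
  rw [← Real.sqrt_sq_eq_abs]
  exact Real.sqrt_le_sqrt (by nlinarith)

lemma radial_lip (x y : ℝ) :
    |Real.sqrt (1 + x ^ 2) - Real.sqrt (1 + y ^ 2)| ≤ |x - y| := by
  set a := Real.sqrt (1 + x ^ 2) with ha
  set b := Real.sqrt (1 + y ^ 2) with hb
  have ha2 : a ^ 2 = 1 + x ^ 2 := Real.sq_sqrt (by positivity)
  have hb2 : b ^ 2 = 1 + y ^ 2 := Real.sq_sqrt (by positivity)
  have ha0 : 0 ≤ a := Real.sqrt_nonneg _
  have hb0 : 0 ≤ b := Real.sqrt_nonneg _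
  have key : (a - b) ^ 2 ≤ (x - y) ^ 2 := by
    nlinarith [sq_nonneg (a * b - 1 - x * y), sq_nonneg (x - y), sq_nonneg (a - b),
      sq_nonneg (a + b), mul_nonneg ha0 hb0]
  calc |a - b| = Real.sqrt ((a - b) ^ 2) := (Real.sqrt_sq_eq_abs _).symm
  _ ≤ Real.sqrt ((x - y) ^ 2) := Real.sqrt_le_sqrt key
  _ = |x - y| := Real.sqrt_sq_eq_abs _

lemma rpow_neg_lip {β m : ℝ} (hβ : 0 < β) (hm : 0 < m) {a b : ℝ} (ha : m ≤ a) (hb : m ≤ b) :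
    |a ^ (-β) - b ^ (-β)| ≤ (β * m ^ (-β - 1)) * |a - b| := by
  have h := Convex.norm_image_sub_le_of_norm_hasDerivWithin_le
    (f := fun t : ℝ => t ^ (-β)) (f' := fun t : ℝ => (-β) * t ^ (-β - 1)) (s := Set.Ici m)
    (fun t ht => (Real.hasDerivAt_rpow_const
      (Or.inl (ne_of_gt (lt_of_lt_of_le hm ht)))).hasDerivWithinAt)
    (fun t ht => by
      have ht' : m ≤ t := ht
      have h1 : t ^ (-β - 1) ≤ m ^ (-β - 1) :=
        Real.rpow_le_rpow_of_nonpos hm ht' (by linarith)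
      have h2 : 0 ≤ t ^ (-β - 1) := Real.rpow_nonneg (by linarith) _
      rw [Real.norm_eq_abs, abs_mul, abs_neg, abs_of_pos hβ, abs_of_nonneg h2]
      exact mul_le_mul_of_nonneg_left h1 hβ.le)
    (convex_Ici m) hb ha
  simpa [Real.norm_eq_abs, abs_sub_comm] using h

lemma integrable_comp_abs' {g : ℝ → ℝ} (hg : IntegrableOn (fun t => g |t|) (Ioi (0:ℝ))) :
    Integrable (fun t => g |t|) := by
  have int_Iic : IntegrableOn (fun t => g |t|) (Iic (0:ℝ)) := by
    rw [← Measure.map_neg_eq_self (volume : Measure ℝ)]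
    have m : MeasurableEmbedding fun x : ℝ => -x := (Homeomorph.neg ℝ).measurableEmbedding
    rw [m.integrableOn_map_iff]
    simp_rw [Function.comp_def, abs_neg, neg_preimage, neg_Iic, neg_zero]
    exact Iff.mpr integrableOn_Ici_iff_integrableOn_Ioi hg
  have h := int_Iic.union hg
  rwa [Iic_union_Ioi, integrableOn_univ] at h

lemma workerA (a c k p : ℝ) (hc : 0 < c) (hp : -1 < p) (hk : 0 ≤ k) :
    Integrable (fun y : ℝ => (Set.indicator (Set.Iio c) (fun u => k * u ^ p)) |a - y|) ∧
    ∫ y : ℝ, (Set.indicator (Set.Iio c) (fun u => k * u ^ p)) |a - y|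
      = 2 * (k * (c ^ (p + 1) / (p + 1))) := by
  set g : ℝ → ℝ := Set.indicator (Set.Iio c) (fun u => k * u ^ p) with hgdef
  have hIoo : IntegrableOn (fun u : ℝ => k * u ^ p) (Ioo 0 c) := by
    have h1 : IntegrableOn (fun u : ℝ => u ^ p) (Ioc 0 c) :=
      (intervalIntegrable_iff_integrableOn_Ioc_of_le hc.le).mp
        (intervalIntegral.intervalIntegrable_rpow' hp)
    exact (h1.mono_set Ioo_subset_Ioc_self).const_mul k
  have hgOn : IntegrableOn g (Ioi (0:ℝ)) := by
    rw [IntegrableOn, hgdef, integrable_indicator_iff measurableSet_Iio]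
    rw [IntegrableOn, Measure.restrict_restrict measurableSet_Iio]
    rwa [show Set.Iio c ∩ Set.Ioi 0 = Set.Ioo 0 c by rw [Set.inter_comm, Set.Ioi_inter_Iio]]
  have hgIoi : IntegrableOn (fun t => g |t|) (Ioi (0:ℝ)) :=
    hgOn.congr_fun (fun t ht => by rw [abs_of_pos ht]) measurableSet_Ioi
  have hInt : Integrable (fun t : ℝ => g |t|) := integrable_comp_abs' hgIoi
  have hcomp : (fun y : ℝ => g |a - y|) = fun y : ℝ => (fun t : ℝ => g |t|) (y - a) := by
    funext y; rw [abs_sub_comm]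
  constructor
  · rw [hcomp]; exact hInt.comp_sub_right a
  · rw [hcomp]
    rw [MeasureTheory.integral_sub_right_eq_self (fun t : ℝ => g |t|) a]
    rw [integral_comp_abs (f := g)]
    congr 1
    rw [hgdef, MeasureTheory.integral_indicator measurableSet_Iio,
      Measure.restrict_restrict measurableSet_Iio,
      show Set.Iio c ∩ Set.Ioi 0 = Set.Ioo 0 c by rw [Set.inter_comm, Set.Ioi_inter_Iio],
      ← MeasureTheory.integral_Ioc_eq_integral_Ioo,
      ← intervalIntegral.integral_of_le hc.le]
    rw [intervalIntegral.integral_const_mul]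
    rw [integral_rpow (Or.inl hp)]
    rw [Real.zero_rpow (by linarith : p + 1 ≠ 0)]
    ring

lemma workerB (a c k p : ℝ) (hc : 0 < c) (hp : p < -1) (hk : 0 ≤ k) :
    Integrable (fun y : ℝ => (Set.indicator (Set.Ici c) (fun u => k * u ^ p)) |a - y|) ∧
    ∫ y : ℝ, (Set.indicator (Set.Ici c) (fun u => k * u ^ p)) |a - y|
      = 2 * (k * (c ^ (p + 1) / (-(p + 1)))) := by
  set g : ℝ → ℝ := Set.indicator (Set.Ici c) (fun u => k * u ^ p) with hgdef
  have hIci : IntegrableOn (fun u : ℝ => k * u ^ p) (Ici c) :=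
    (Iff.mpr integrableOn_Ici_iff_integrableOn_Ioi
      (integrableOn_Ioi_rpow_of_lt hp hc)).const_mul k
  have hsub : Set.Ici c ∩ Set.Ioi 0 = Set.Ici c :=
    Set.inter_eq_left.mpr (fun t ht => lt_of_lt_of_le hc ht)
  have hgOn : IntegrableOn g (Ioi (0:ℝ)) := by
    rw [IntegrableOn, hgdef, integrable_indicator_iff measurableSet_Ici]
    rw [IntegrableOn, Measure.restrict_restrict measurableSet_Ici, hsub]
    exact hIci
  have hgIoi : IntegrableOn (fun t => g |t|) (Ioi (0:ℝ)) :=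
    hgOn.congr_fun (fun t ht => by rw [abs_of_pos ht]) measurableSet_Ioi
  have hInt : Integrable (fun t : ℝ => g |t|) := integrable_comp_abs' hgIoi
  have hcomp : (fun y : ℝ => g |a - y|) = fun y : ℝ => (fun t : ℝ => g |t|) (y - a) := by
    funext y; rw [abs_sub_comm]
  constructor
  · rw [hcomp]; exact hInt.comp_sub_right a
  · rw [hcomp]
    rw [MeasureTheory.integral_sub_right_eq_self (fun t : ℝ => g |t|) a]
    rw [integral_comp_abs (f := g)]
    congr 1
    rw [hgdef, MeasureTheory.integral_indicator measurableSet_Ici,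
      Measure.restrict_restrict measurableSet_Ici, hsub,
      MeasureTheory.integral_Ici_eq_integral_Ioi]
    rw [MeasureTheory.integral_const_mul, integral_Ioi_rpow_of_lt hp hc]
    rw [div_neg]
    ring

lemma main_est (β s : ℝ) (hβ0 : 0 < β) (hβ1 : β < 1) (hs0 : 0 < s) (hs1 : s < 1) (x : ℝ) :
    Integrable (fun y : ℝ => (wbeta β x - wbeta β y) * |x - y| ^ (-(1 + s))) ∧
    |∫ y : ℝ, (wbeta β x - wbeta β y) * |x - y| ^ (-(1 + s))|
      ≤ (16 / (1 - s) + 16 / s + 16 / (1 - β) + 128 / (s + β)) * wbeta β x := by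
  set r : ℝ := Real.sqrt (1 + x ^ 2) with hrdef
  have hr1 : 1 ≤ r := one_le_sqrt' x
  have hr0 : 0 < r := lt_of_lt_of_le one_pos hr1
  have hρ : 0 < r / 2 := by linarith
  have hwx : wbeta β x = r ^ (-β) := wbeta_sqrt β x
  have hW : 0 < r ^ (-β) := Real.rpow_pos_of_pos hr0 _
  set f : ℝ → ℝ := fun y : ℝ => (wbeta β x - wbeta β y) * |x - y| ^ (-(1 + s)) with hfdef
  -- the four majorant pieces
  obtain ⟨i1, v1⟩ := workerA x (r / 2) (β * (r / 2) ^ (-β - 1)) (-s) hρ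
    (by linarith) (by positivity)
  obtain ⟨i2, v2⟩ := workerB x (r / 2) (r ^ (-β)) (-(1 + s)) hρ (by linarith) (by positivity)
  obtain ⟨i3, v3⟩ := workerA 0 (2 * r) ((r / 2) ^ (-(1 + s))) (-β) (by linarith)
    (by linarith) (by positivity)
  obtain ⟨i4, v4⟩ := workerB 0 (2 * r) ((2:ℝ) ^ (1 + s)) (-(1 + s + β)) (by linarith)
    (by linarith) (by positivity)
  set g1 : ℝ → ℝ := fun y : ℝ =>
    (Set.indicator (Set.Iio (r / 2)) (fun u => (β * (r / 2) ^ (-β - 1)) * u ^ (-s))) |x - y|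
  set g2 : ℝ → ℝ := fun y : ℝ =>
    (Set.indicator (Set.Ici (r / 2)) (fun u => r ^ (-β) * u ^ (-(1 + s)))) |x - y|
  set g3 : ℝ → ℝ := fun y : ℝ =>
    (Set.indicator (Set.Iio (2 * r)) (fun u => (r / 2) ^ (-(1 + s)) * u ^ (-β))) |0 - y|
  set g4 : ℝ → ℝ := fun y : ℝ =>
    (Set.indicator (Set.Ici (2 * r)) (fun u => (2:ℝ) ^ (1 + s) * u ^ (-(1 + s + β)))) |0 - y|
  set G : ℝ → ℝ := fun y => g1 y + g2 y + g3 y + g4 y with hGdef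
  have hG : Integrable G := (((i1.add i2).add i3).add i4)
  -- nonnegativity of the pieces
  have n1 : ∀ y : ℝ, 0 ≤ g1 y := fun y =>
    Set.indicator_apply_nonneg (fun _ => by positivity)
  have n2 : ∀ y : ℝ, 0 ≤ g2 y := fun y =>
    Set.indicator_apply_nonneg (fun _ => by positivity)
  have n3 : ∀ y : ℝ, 0 ≤ g3 y := fun y =>
    Set.indicator_apply_nonneg (fun _ => by positivity)
  have n4 : ∀ y : ℝ, 0 ≤ g4 y := fun y =>
    Set.indicator_apply_nonneg (fun _ => by positivity)
  -- pointwise bound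
  have hptwise : ∀ y : ℝ, y ≠ 0 → ‖f y‖ ≤ G y := by
    intro y hy0
    set b : ℝ := Real.sqrt (1 + y ^ 2) with hbdef
    have hb1 : 1 ≤ b := one_le_sqrt' y
    have hyb : |y| ≤ b := abs_le_sqrt' y
    have hxr : |x| ≤ r := abs_le_sqrt' x
    have hwy : wbeta β y = b ^ (-β) := wbeta_sqrt β y
    have hwyp : 0 < b ^ (-β) := Real.rpow_pos_of_pos (by linarith) _
    set d : ℝ := |x - y| with hddef
    have hd0 : 0 ≤ d := abs_nonneg _
    have hlipr : |r - b| ≤ d := radial_lip x y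
    have habs : ‖f y‖ = |wbeta β x - wbeta β y| * d ^ (-(1 + s)) := by
      rw [hfdef]
      rw [Real.norm_eq_abs, abs_mul, abs_of_nonneg (Real.rpow_nonneg hd0 _)]
    have hy_abs_pos : 0 < |y| := abs_pos.mpr hy0
    by_cases hnear : d < r / 2
    · -- near region
      have hblow : r / 2 ≤ b := by
        have h1 : r - b ≤ |r - b| := le_abs_self _
        linarith
      have hlip2 : |wbeta β x - wbeta β y| ≤ (β * (r / 2) ^ (-β - 1)) * d := by
        rw [hwx, hwy]
        exact (rpow_neg_lip hβ0 hρ (by linarith : r / 2 ≤ r) hblow).trans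
          (mul_le_mul_of_nonneg_left hlipr (by positivity))
      have hdd : d * d ^ (-(1 + s)) = d ^ (-s) := by
        rw [show (-s : ℝ) = 1 + -(1 + s) by ring,
          Real.rpow_add' hd0 (by intro hcon; linarith), Real.rpow_one]
      have hg1 : g1 y = (β * (r / 2) ^ (-β - 1)) * d ^ (-s) :=
        Set.indicator_of_mem (show d ∈ Set.Iio (r / 2) from hnear) _
      have : ‖f y‖ ≤ g1 y := by
        rw [habs, hg1]
        calc |wbeta β x - wbeta β y| * d ^ (-(1 + s))
            ≤ ((β * (r / 2) ^ (-β - 1)) * d) * d ^ (-(1 + s)) :=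
              mul_le_mul_of_nonneg_right hlip2 (Real.rpow_nonneg hd0 _)
        _ = (β * (r / 2) ^ (-β - 1)) * (d * d ^ (-(1 + s))) := by ring
        _ = (β * (r / 2) ^ (-β - 1)) * d ^ (-s) := by rw [hdd]
      have hGy : G y = g1 y + g2 y + g3 y + g4 y := rfl
      have := n2 y; have := n3 y; have := n4 y
      rw [hGy]; linarith
    · -- far region
      push_neg at hnear
      have hdpos : 0 < d := lt_of_lt_of_le hρ hnear
      have htri : |wbeta β x - wbeta β y| ≤ r ^ (-β) + b ^ (-β) := by
        rw [hwx, hwy]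
        calc |r ^ (-β) - b ^ (-β)| ≤ |r ^ (-β)| + |b ^ (-β)| := abs_sub _ _
        _ = r ^ (-β) + b ^ (-β) := by rw [abs_of_pos hW, abs_of_pos hwyp]
      have hg2 : g2 y = r ^ (-β) * d ^ (-(1 + s)) :=
        Set.indicator_of_mem (show d ∈ Set.Ici (r / 2) from hnear) _
      have h0y : |(0:ℝ) - y| = |y| := by rw [zero_sub, abs_neg]
      have hsecond : b ^ (-β) * d ^ (-(1 + s)) ≤ g3 y + g4 y := by
        have hwyb : b ^ (-β) ≤ |y| ^ (-β) :=
          Real.rpow_le_rpow_of_nonpos hy_abs_pos hyb (by linarith)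
        by_cases h2r : |y| < 2 * r
        · have hdq : d ^ (-(1 + s)) ≤ (r / 2) ^ (-(1 + s)) :=
            Real.rpow_le_rpow_of_nonpos hρ hnear (by linarith)
          have hg3 : g3 y = (r / 2) ^ (-(1 + s)) * |y| ^ (-β) := by
            show Set.indicator _ _ _ = _
            rw [h0y]
            exact Set.indicator_of_mem (show |y| ∈ Set.Iio (2 * r) from h2r) _
          have hle : b ^ (-β) * d ^ (-(1 + s)) ≤ |y| ^ (-β) * (r / 2) ^ (-(1 + s)) :=
            mul_le_mul hwyb hdq (Real.rpow_nonneg hd0 _) (Real.rpow_nonneg (abs_nonneg _) _)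
          rw [mul_comm] at hle
          have := n4 y
          rw [hg3]; linarith
        · push_neg at h2r
          have hyd : |y| / 2 ≤ d := by
            have h1 : |y| - |x| ≤ |y - x| := abs_sub_abs_le_abs_sub y x
            have h2 : |y - x| = d := by rw [hddef, abs_sub_comm]
            linarith
          have hy2pos : 0 < |y| / 2 := by linarith
          have hdq : d ^ (-(1 + s)) ≤ (|y| / 2) ^ (-(1 + s)) :=
            Real.rpow_le_rpow_of_nonpos hy2pos hyd (by linarith)
          have hsplit : (|y| / 2) ^ (-(1 + s)) = |y| ^ (-(1 + s)) * 2 ^ (1 + s) := by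
            rw [Real.div_rpow (abs_nonneg y) (by norm_num : (0:ℝ) ≤ 2),
              Real.rpow_neg (by norm_num : (0:ℝ) ≤ 2), div_eq_mul_inv, inv_inv]
          have hcomb : |y| ^ (-β) * |y| ^ (-(1 + s)) = |y| ^ (-(1 + s + β)) := by
            rw [← Real.rpow_add hy_abs_pos]
            ring_nf
          have hg4 : g4 y = (2:ℝ) ^ (1 + s) * |y| ^ (-(1 + s + β)) := by
            show Set.indicator _ _ _ = _
            rw [h0y]
            exact Set.indicator_of_mem (show |y| ∈ Set.Ici (2 * r) from h2r) _
          have hle : b ^ (-β) * d ^ (-(1 + s))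
              ≤ |y| ^ (-β) * (|y| ^ (-(1 + s)) * 2 ^ (1 + s)) := by
            calc b ^ (-β) * d ^ (-(1 + s))
                ≤ |y| ^ (-β) * (|y| / 2) ^ (-(1 + s)) :=
                  mul_le_mul hwyb hdq (Real.rpow_nonneg hd0 _)
                    (Real.rpow_nonneg (abs_nonneg _) _)
            _ = |y| ^ (-β) * (|y| ^ (-(1 + s)) * 2 ^ (1 + s)) := by rw [hsplit]
          have hle2 : b ^ (-β) * d ^ (-(1 + s)) ≤ (2:ℝ) ^ (1 + s) * |y| ^ (-(1 + s + β)) := by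
            calc b ^ (-β) * d ^ (-(1 + s))
                ≤ |y| ^ (-β) * (|y| ^ (-(1 + s)) * 2 ^ (1 + s)) := hle
            _ = (|y| ^ (-β) * |y| ^ (-(1 + s))) * 2 ^ (1 + s) := by ring
            _ = (2:ℝ) ^ (1 + s) * |y| ^ (-(1 + s + β)) := by rw [hcomb]; ring
          have := n3 y
          rw [hg4]; linarith
      calc ‖f y‖ = |wbeta β x - wbeta β y| * d ^ (-(1 + s)) := habs
      _ ≤ (r ^ (-β) + b ^ (-β)) * d ^ (-(1 + s)) :=
          mul_le_mul_of_nonneg_right htri (Real.rpow_nonneg hd0 _)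
      _ = r ^ (-β) * d ^ (-(1 + s)) + b ^ (-β) * d ^ (-(1 + s)) := by ring
      _ ≤ g2 y + (g3 y + g4 y) := by rw [← hg2]; exact add_le_add (le_refl _) hsecond
      _ ≤ G y := by
          have hGy : G y = g1 y + g2 y + g3 y + g4 y := rfl
          have := n1 y; rw [hGy]; linarith
  have hae : ∀ᵐ y : ℝ, ‖f y‖ ≤ G y := by
    have h0 : ∀ᵐ y : ℝ, y ≠ (0:ℝ) := by
      refine ae_iff.mpr ?_
      simp only [ne_eq, not_not, setOf_eq_eq_singleton]
      exact measure_singleton 0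
    exact h0.mono fun y hy => hptwise y hy
  have hmeas : AEStronglyMeasurable f volume := by
    apply Measurable.aestronglyMeasurable
    rw [hfdef]; unfold wbeta
    fun_prop
  have hf_int : Integrable f := Integrable.mono' hG hmeas hae
  refine ⟨hf_int, ?_⟩
  -- now the bound
  have step1 : |∫ y : ℝ, f y| ≤ ∫ y : ℝ, ‖f y‖ := by
    rw [← Real.norm_eq_abs]
    exact norm_integral_le_integral_norm f
  have step2 : ∫ y : ℝ, ‖f y‖ ≤ ∫ y : ℝ, G y :=
    integral_mono_ae hf_int.norm hG hae
  have vG : ∫ y : ℝ, G y =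
      2 * ((β * (r / 2) ^ (-β - 1)) * ((r / 2) ^ (-s + 1) / (-s + 1)))
      + 2 * (r ^ (-β) * ((r / 2) ^ (-(1 + s) + 1) / (-(-(1 + s) + 1))))
      + 2 * ((r / 2) ^ (-(1 + s)) * ((2 * r) ^ (-β + 1) / (-β + 1)))
      + 2 * ((2:ℝ) ^ (1 + s) * ((2 * r) ^ (-(1 + s + β) + 1) / (-(-(1 + s + β) + 1)))) := by
    have i12 : Integrable (fun y : ℝ => g1 y + g2 y) := i1.add i2
    have i123 : Integrable (fun y : ℝ => g1 y + g2 y + g3 y) := i12.add i3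
    have hGi : ∫ y : ℝ, G y = ∫ y : ℝ, (g1 y + g2 y + g3 y + g4 y) := rfl
    have e4 : ∫ y : ℝ, (g1 y + g2 y + g3 y + g4 y)
        = (∫ y : ℝ, (g1 y + g2 y + g3 y)) + ∫ y : ℝ, g4 y := integral_add i123 i4
    have e3 : ∫ y : ℝ, (g1 y + g2 y + g3 y)
        = (∫ y : ℝ, (g1 y + g2 y)) + ∫ y : ℝ, g3 y := integral_add i12 i3
    have e2 : ∫ y : ℝ, (g1 y + g2 y) = (∫ y : ℝ, g1 y) + ∫ y : ℝ, g2 y := integral_add i1 i2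
    rw [hGi, e4, e3, e2, v1, v2, v3, v4]
  -- auxiliary bounds
  have two0 : (0:ℝ) ≤ 2 := by norm_num
  have hq8 : ∀ q : ℝ, q ≤ 3 → (2:ℝ) ^ q ≤ 8 := by
    intro q hq
    calc (2:ℝ) ^ q ≤ 2 ^ (3:ℝ) := Real.rpow_le_rpow_of_exponent_le one_le_two hq
    _ = 8 := by
      rw [show (3:ℝ) = ((3:ℕ):ℝ) by norm_num, Real.rpow_natCast]; norm_num
  have hrq : ∀ q : ℝ, q ≤ -β → r ^ q ≤ r ^ (-β) := fun q hq =>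
    Real.rpow_le_rpow_of_exponent_le hr1 hq
  have half : ∀ q : ℝ, (r / 2) ^ q = r ^ q * 2 ^ (-q) := by
    intro q
    rw [Real.div_rpow hr0.le two0, Real.rpow_neg two0, div_eq_mul_inv]
  have dbl : ∀ q : ℝ, (2 * r) ^ q = 2 ^ q * r ^ q := fun q =>
    Real.mul_rpow two0 hr0.le
  have divle : ∀ {X Y D : ℝ}, 0 < D → X ≤ Y → X / D ≤ Y / D := by
    intro X Y D hD h
    rw [div_eq_mul_inv, div_eq_mul_inv]
    exact mul_le_mul_of_nonneg_right h (inv_nonneg.mpr hD.le)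
  -- piece 1
  have b1 : 2 * ((β * (r / 2) ^ (-β - 1)) * ((r / 2) ^ (-s + 1) / (-s + 1)))
      ≤ 16 / (1 - s) * r ^ (-β) := by
    have e1 : (r / 2) ^ (-β - 1) * (r / 2) ^ (-s + 1) = r ^ (-(β + s)) * 2 ^ (β + s) := by
      rw [half (-β - 1), half (-s + 1),
        show r ^ (-β - 1) * 2 ^ (-(-β - 1)) * (r ^ (-s + 1) * 2 ^ (-(-s + 1)))
          = (r ^ (-β - 1) * r ^ (-s + 1)) * (2 ^ (-(-β - 1)) * 2 ^ (-(-s + 1))) by ring,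
        ← Real.rpow_add hr0, ← Real.rpow_add two_pos,
        show (-β - 1) + (-s + 1) = -(β + s) by ring,
        show (-(-β - 1)) + (-(-s + 1)) = β + s by ring]
    have hA : r ^ (-(β + s)) ≤ r ^ (-β) := hrq _ (by linarith)
    have hB : (2:ℝ) ^ (β + s) ≤ 8 := hq8 _ (by linarith)
    have hB0 : 0 ≤ (2:ℝ) ^ (β + s) := Real.rpow_nonneg two0 _
    have key : (r / 2) ^ (-β - 1) * (r / 2) ^ (-s + 1) ≤ r ^ (-β) * 8 := by
      rw [e1]; exact mul_le_mul hA hB hB0 hW.le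
    have hP0 : 0 ≤ (r / 2) ^ (-β - 1) * (r / 2) ^ (-s + 1) :=
      mul_nonneg (Real.rpow_nonneg hρ.le _) (Real.rpow_nonneg hρ.le _)
    calc 2 * ((β * (r / 2) ^ (-β - 1)) * ((r / 2) ^ (-s + 1) / (-s + 1)))
        = (2 * β * ((r / 2) ^ (-β - 1) * (r / 2) ^ (-s + 1))) / (-s + 1) := by ring
    _ ≤ (16 * r ^ (-β)) / (-s + 1) := divle (by linarith)
        (by nlinarith [key, hP0])
    _ = 16 / (1 - s) * r ^ (-β) := by ring
  -- piece 2
  have b2 : 2 * (r ^ (-β) * ((r / 2) ^ (-(1 + s) + 1) / (-(-(1 + s) + 1))))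
      ≤ 16 / s * r ^ (-β) := by
    have hA : r ^ (-(1 + s) + 1) ≤ 1 :=
      Real.rpow_le_one_of_one_le_of_nonpos hr1 (by linarith)
    have hA0 : 0 ≤ r ^ (-(1 + s) + 1) := Real.rpow_nonneg hr0.le _
    have hB : (2:ℝ) ^ (-(-(1 + s) + 1)) ≤ 8 := hq8 _ (by linarith)
    have hB0 : 0 ≤ (2:ℝ) ^ (-(-(1 + s) + 1)) := Real.rpow_nonneg two0 _
    have key : (r / 2) ^ (-(1 + s) + 1) ≤ 8 := by
      rw [half (-(1 + s) + 1)]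
      nlinarith [hA, hB, hA0, hB0]
    have hP0 : 0 ≤ (r / 2) ^ (-(1 + s) + 1) := Real.rpow_nonneg hρ.le _
    calc 2 * (r ^ (-β) * ((r / 2) ^ (-(1 + s) + 1) / (-(-(1 + s) + 1))))
        = (2 * r ^ (-β) * (r / 2) ^ (-(1 + s) + 1)) / (-(-(1 + s) + 1)) := by ring
    _ ≤ (16 * r ^ (-β)) / (-(-(1 + s) + 1)) := divle (by linarith)
        (by nlinarith [key, hW, hP0])
    _ = 16 / s * r ^ (-β) := by ring
  -- piece 3
  have b3 : 2 * ((r / 2) ^ (-(1 + s)) * ((2 * r) ^ (-β + 1) / (-β + 1)))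
      ≤ 16 / (1 - β) * r ^ (-β) := by
    have hA : r ^ (-(1 + s) + (-β + 1)) ≤ r ^ (-β) := hrq _ (by linarith)
    have hB : (2:ℝ) ^ (-(-(1 + s)) + (-β + 1)) ≤ 8 := hq8 _ (by linarith)
    have hB0 : 0 ≤ (2:ℝ) ^ (-(-(1 + s)) + (-β + 1)) := Real.rpow_nonneg two0 _
    have key : (r / 2) ^ (-(1 + s)) * (2 * r) ^ (-β + 1) ≤ r ^ (-β) * 8 := by
      rw [half (-(1 + s)), dbl (-β + 1)]
      calc (r ^ (-(1 + s)) * 2 ^ (-(-(1 + s)))) * (2 ^ (-β + 1) * r ^ (-β + 1))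
          = (r ^ (-(1 + s)) * r ^ (-β + 1)) * (2 ^ (-(-(1 + s))) * 2 ^ (-β + 1)) :=
            mul_mul_mul_comm _ _ _ _ |>.trans (by rw [mul_comm (r ^ (-(1 + s)) * 2 ^ (-β + 1))]
              ) |>.symm ▸ (by ring)
      _ = r ^ (-(1 + s) + (-β + 1)) * 2 ^ (-(-(1 + s)) + (-β + 1)) := by
            rw [← Real.rpow_add hr0, ← Real.rpow_add two_pos]
      _ ≤ r ^ (-β) * 8 := mul_le_mul hA hB hB0 hW.le
    have hP0 : 0 ≤ (r / 2) ^ (-(1 + s)) * (2 * r) ^ (-β + 1) :=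
      mul_nonneg (Real.rpow_nonneg hρ.le _) (Real.rpow_nonneg (by linarith) _)
    calc 2 * ((r / 2) ^ (-(1 + s)) * ((2 * r) ^ (-β + 1) / (-β + 1)))
        = (2 * ((r / 2) ^ (-(1 + s)) * (2 * r) ^ (-β + 1))) / (-β + 1) := by ring
    _ ≤ (16 * r ^ (-β)) / (-β + 1) := divle (by linarith)
        (by nlinarith [key, hP0])
    _ = 16 / (1 - β) * r ^ (-β) := by ring
  -- piece 4
  have b4 : 2 * ((2:ℝ) ^ (1 + s) * ((2 * r) ^ (-(1 + s + β) + 1) / (-(-(1 + s + β) + 1))))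
      ≤ 128 / (s + β) * r ^ (-β) := by
    have eD : (2 * r) ^ (-(1 + s + β) + 1)
        = 2 ^ (-(1 + s + β) + 1) * r ^ (-(1 + s + β) + 1) := dbl _
    have hA : r ^ (-(1 + s + β) + 1) ≤ r ^ (-β) := hrq _ (by linarith)
    have hA0 : 0 ≤ r ^ (-(1 + s + β) + 1) := Real.rpow_nonneg hr0.le _
    have hB : (2:ℝ) ^ (-(1 + s + β) + 1) ≤ 8 := hq8 _ (by linarith)
    have hB0 : 0 ≤ (2:ℝ) ^ (-(1 + s + β) + 1) := Real.rpow_nonneg two0 _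
    have hC : (2:ℝ) ^ (1 + s) ≤ 8 := hq8 _ (by linarith)
    have hC0 : 0 ≤ (2:ℝ) ^ (1 + s) := Real.rpow_nonneg two0 _
    have key : (2 * r) ^ (-(1 + s + β) + 1) ≤ 8 * r ^ (-β) := by
      rw [eD]; exact mul_le_mul hB hA hA0 (by norm_num)
    have hP0 : 0 ≤ (2 * r) ^ (-(1 + s + β) + 1) := Real.rpow_nonneg (by linarith) _
    calc 2 * ((2:ℝ) ^ (1 + s) * ((2 * r) ^ (-(1 + s + β) + 1) / (-(-(1 + s + β) + 1))))
        = (2 * (2:ℝ) ^ (1 + s) * (2 * r) ^ (-(1 + s + β) + 1)) / (-(-(1 + s + β) + 1)) := by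
          ring
    _ ≤ (128 * r ^ (-β)) / (-(-(1 + s + β) + 1)) := divle (by linarith)
        (by nlinarith [key, hC, hC0, hP0, hW])
    _ = 128 / (s + β) * r ^ (-β) := by ring
  calc |∫ y : ℝ, f y| ≤ ∫ y : ℝ, ‖f y‖ := step1
  _ ≤ ∫ y : ℝ, G y := step2
  _ = _ := vG
  _ ≤ (16 / (1 - s) + 16 / s + 16 / (1 - β) + 128 / (s + β)) * r ^ (-β) := by
      linarith [b1, b2, b3, b4]
  _ = (16 / (1 - s) + 16 / s + 16 / (1 - β) + 128 / (s + β)) * wbeta β x := by rw [hwx]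

end WbetaAux

/-- Pointwise bound `|Λ^s w_β(x)| ≤ C w_β(x)` for `0 < β < 1` and `0 < s < 1`, where
`Λ^s` is realized (up to a positive normalizing constant) by the absolutely convergent
integral `∫ (w_β(x) − w_β(y)) |x−y|^{−1−s} dy`. -/
theorem wbeta_fractional_bound (β s : ℝ) (hβ0 : 0 < β) (hβ1 : β < 1)
    (hs0 : 0 < s) (hs1 : s < 1) :
    (∀ x : ℝ, Integrable (fun y : ℝ => (wbeta β x - wbeta β y) * |x - y| ^ (-(1 + s)))) ∧
    ∃ C > 0, ∀ x : ℝ,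
      |∫ y : ℝ, (wbeta β x - wbeta β y) * |x - y| ^ (-(1 + s))| ≤ C * wbeta β x := by
  constructor
  · exact fun x => (WbetaAux.main_est β s hβ0 hβ1 hs0 hs1 x).1
  · refine ⟨16 / (1 - s) + 16 / s + 16 / (1 - β) + 128 / (s + β), ?_,
      fun x => (WbetaAux.main_est β s hβ0 hβ1 hs0 hs1 x).2⟩
    have h1 : (0:ℝ) < 1 - s := by linarith
    have h2 : (0:ℝ) < 1 - β := by linarith
    have h3 : (0:ℝ) < s + β := by linarith
    positivity
end
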